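/- (The property (*)_λ[I] of Lemma 3.7.) Let λ be an infinite cardinal and let I = ({}^{ω>}λ, <_lex) be the linear order of all finite sequences of ordinals below λ under the lexicographic order. Then I has cardinality λ, and for every cardinal θ with ℵ₀ ≤ θ < λ and every J₀ ⊆ I with |J₀| = θ, there exists J₁ with J₀ ⊆ J₁ ⊆ I and |J₁| = θ such that for every J* ⊆ I of cardinality ≤ θ there is an order-preserving injection from J₀ ∪ J* into J₁ which is the identity on J₀. -/

import Mathlib

open Filter Cardinal

universe u

section DivLtLemmas
variable {α : Type*} [LinearOrder α]

/-- `u` is lexicographically below `v` with divergence (`u` is not a prefix of `v`). -/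
def DivLt (u v : List α) : Prop :=
  ∃ (p u' v' : List α) (a b : α), a < b ∧ u = p ++ a :: u' ∧ v = p ++ b :: v'

theorem DivLt.append {u v : List α} (h : DivLt u v) (w w' : List α) :
    DivLt (u ++ w) (v ++ w') := by
  obtain ⟨p, u', v', a, b, hab, rfl, rfl⟩ := h
  exact ⟨p, u' ++ w, v' ++ w', a, b, hab, by simp, by simp⟩

theorem DivLt.lex {u v : List α} (h : DivLt u v) : List.Lex (· < ·) u v := by
  obtain ⟨p, u', v', a, b, hab, rfl, rfl⟩ := h
  induction p with
  | nil => exact List.Lex.rel hab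
  | cons c p ih => exact List.Lex.cons ih

theorem DivLt.cons_same {u v : List α} (c : α) (h : DivLt u v) :
    DivLt (c :: u) (c :: v) := by
  obtain ⟨p, u', v', a, b, hab, rfl, rfl⟩ := h
  exact ⟨c :: p, u', v', a, b, hab, rfl, rfl⟩

theorem divLt_of_head_lt {a b : α} {u v : List α} (h : a < b) :
    DivLt (a :: u) (b :: v) :=
  ⟨[], u, v, a, b, h, rfl, rfl⟩

theorem DivLt.map {β : Type*} [LinearOrder β] {f : α → β} (hf : StrictMono f)
    {u v : List α} (h : DivLt u v) : DivLt (u.map f) (v.map f) := by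
  obtain ⟨p, u', v', a, b, hab, rfl, rfl⟩ := h
  exact ⟨p.map f, u'.map f, v'.map f, f a, f b, hf hab, by simp, by simp⟩

theorem lex_append_left {l l' : List α} (h : List.Lex (· < ·) l l') (w : List α) :
    List.Lex (· < ·) (w ++ l) (w ++ l') := by
  induction w with
  | nil => exact h
  | cons c p ih => exact List.Lex.cons ih

theorem lex_flatMap {S : Set α} {g : α → List α} (h0 : ∀ x ∈ S, g x ≠ [])
    (h1 : ∀ x ∈ S, ∀ y ∈ S, x < y → DivLt (g x) (g y)) :
    ∀ {t t' : List α}, (∀ x ∈ t, x ∈ S) → (∀ x ∈ t', x ∈ S) →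
      List.Lex (· < ·) t t' → List.Lex (· < ·) (t.flatMap g) (t'.flatMap g) := by
  intro t t' ht ht' hlex
  induction hlex with
  | @nil b l =>
      have hb : g b ≠ [] := h0 b (ht' b (by simp))
      rw [List.flatMap_nil, List.flatMap_cons]
      rcases hgb : g b with _ | ⟨c, cs⟩
      · exact absurd hgb hb
      · exact List.Lex.nil
  | @cons a l l' h ih =>
      rw [List.flatMap_cons, List.flatMap_cons]
      exact lex_append_left
        (ih (fun x hx => ht x (by simp [hx])) (fun x hx => ht' x (by simp [hx]))) _
  | @rel a l b l' hab =>
      rw [List.flatMap_cons, List.flatMap_cons]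
      exact ((h1 a (ht a (by simp)) b (ht' b (by simp)) hab).append _ _).lex

end DivLtLemmas

/-- Every ordinal of cardinality at most `θ` embeds into the lexicographic tree
`List θ.ord.ToType` with pairwise divergent (antichain) images. -/
theorem exists_divLt_embed (θ : Cardinal.{u}) (hθ : ℵ₀ ≤ θ) :
    ∀ ξ : Ordinal.{u}, ξ.card ≤ θ →
      ∃ e : Set.Iio ξ → List θ.ord.ToType,
        (∀ x, e x ≠ []) ∧ ∀ x y : Set.Iio ξ, x < y → DivLt (e x) (e y) := by
  classical
  have hω : Ordinal.omega0 ≤ θ.ord := by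
    rw [← Cardinal.ord_aleph0]; exact Cardinal.ord_le_ord.mpr hθ
  have h0 : (0 : Ordinal) < θ.ord := lt_of_lt_of_le Ordinal.omega0_pos hω
  have h1 : (1 : Ordinal) < θ.ord := lt_of_lt_of_le Ordinal.one_lt_omega0 hω
  set κ := Ordinal.ToType.mk (o := θ.ord) with hκ
  intro ξ₀
  induction ξ₀ using Ordinal.induction with
  | h ξ IH =>
    intro hξcard
    rcases le_or_gt ξ θ.ord with hle | hgt
    · refine ⟨fun x => [κ ⟨x.1, lt_of_lt_of_le x.2 hle⟩], fun x => by simp, ?_⟩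
      intro x y hxy
      exact divLt_of_head_lt (κ.lt_iff_lt.mpr (Subtype.mk_lt_mk.mpr hxy))
    · haveI hne : Nonempty (Set.Iio ξ) := ⟨⟨0, h0.trans hgt⟩⟩
      have hcard : #(Set.Iio ξ) ≤ #(Set.Iio θ.ord) := by
        rw [Ordinal.mk_Iio_ordinal, Ordinal.mk_Iio_ordinal, Cardinal.lift_le,
          Cardinal.card_ord]
        exact hξcard
      obtain ⟨j⟩ := (Cardinal.le_def _ _).mp hcard
      set f : Set.Iio θ.ord → Set.Iio ξ := Function.invFun j with hf
      have hfsurj : Function.Surjective f := Function.invFun_surjective j.injective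
      choose E hE0 hE1 using fun i : Set.Iio θ.ord =>
        IH (f i).1 (f i).2 ((Ordinal.card_le_card (le_of_lt (f i).2)).trans hξcard)
      set k0 : θ.ord.ToType := κ ⟨0, h0⟩ with hk0
      set k1 : θ.ord.ToType := κ ⟨1, h1⟩ with hk1
      have hk01 : k0 < k1 := κ.lt_iff_lt.mpr (Subtype.mk_lt_mk.mpr zero_lt_one)
      set go : Set.Iio θ.ord → Ordinal → List θ.ord.ToType := fun i o =>
        κ i :: (if h : o < (f i).1 then k0 :: E i ⟨o, h⟩ else [k1]) with hgo
      set S : Set.Iio ξ → Set Ordinal :=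
        fun x => {i | ∃ h : i < θ.ord, x.1 ≤ (f ⟨i, h⟩).1} with hS
      have hSne : ∀ x, (S x).Nonempty := by
        intro x
        obtain ⟨i, hi⟩ := hfsurj x
        exact ⟨i.1, i.2, by rw [Subtype.coe_eta, hi]⟩
      set ix : Set.Iio ξ → Ordinal := fun x => sInf (S x) with hix
      have hmem : ∀ x, ix x ∈ S x := fun x => csInf_mem (hSne x)
      have hblt : ∀ x, ix x < θ.ord := fun x => (hmem x).choose
      set blk : Set.Iio ξ → Set.Iio θ.ord := fun x => ⟨ix x, hblt x⟩ with hblk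
      have hble : ∀ x, x.1 ≤ (f (blk x)).1 := fun x => (hmem x).choose_spec
      have hixmono : ∀ x y : Set.Iio ξ, x < y → ix x ≤ ix y := by
        intro x y hxy
        exact csInf_le' ⟨hblt y, le_of_lt (lt_of_lt_of_le hxy (hble y))⟩
      have hgomono : ∀ (i : Set.Iio θ.ord) (o o' : Ordinal), o < o' → o' ≤ (f i).1 →
          DivLt (go i o) (go i o') := by
        intro i o o' hoo' ho'
        have ho : o < (f i).1 := lt_of_lt_of_le hoo' ho'
        rcases eq_or_lt_of_le ho' with heq | hlt
        · subst heq
          simp only [hgo, dif_pos ho, dif_neg (lt_irrefl _)]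
          exact DivLt.cons_same _ (divLt_of_head_lt hk01)
        · simp only [hgo, dif_pos ho, dif_pos hlt]
          exact DivLt.cons_same _ (DivLt.cons_same _
            (hE1 i ⟨o, ho⟩ ⟨o', hlt⟩ (Subtype.mk_lt_mk.mpr hoo')))
      refine ⟨fun x => go (blk x) x.1, fun x => by simp [hgo], ?_⟩
      intro x y hxy
      rcases eq_or_lt_of_le (hixmono x y hxy) with heq | hlt
      · have hb : blk x = blk y := Subtype.ext heq
        show DivLt (go (blk x) x.1) (go (blk y) y.1)
        rw [hb]
        exact hgomono (blk y) x.1 y.1 hxy (hble y)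
      · exact divLt_of_head_lt (κ.lt_iff_lt.mpr (Subtype.mk_lt_mk.mpr hlt))

/-- Every subset of cardinality at most `θ` of a well-ordered linear order embeds into
the lexicographic tree `List θ.ord.ToType` with pairwise divergent images. -/
theorem exists_divLt_embed_set {α : Type u} [LinearOrder α] [WellFoundedLT α]
    (θ : Cardinal.{u}) (hθ : ℵ₀ ≤ θ) (s : Set α) (hs : #s ≤ θ) :
    ∃ e : α → List θ.ord.ToType, (∀ x ∈ s, e x ≠ []) ∧
      ∀ x ∈ s, ∀ y ∈ s, x < y → DivLt (e x) (e y) := by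
  classical
  set ζ : Ordinal.{u} := Ordinal.type ((· < ·) : ↥s → ↥s → Prop) with hζ
  have hζcard : ζ.card ≤ θ := by rw [hζ, Ordinal.card_type]; exact hs
  obtain ⟨e₀, he₀, he₁⟩ := exists_divLt_embed θ hθ ζ hζcard
  refine ⟨fun x => if h : x ∈ s then
      e₀ ⟨Ordinal.typein ((· < ·) : ↥s → ↥s → Prop) ⟨x, h⟩,
        Ordinal.typein_lt_type _ _⟩ else [], ?_, ?_⟩
  · intro x hx
    simp only [dif_pos hx]
    exact he₀ _
  · intro x hx y hy hxy
    simp only [dif_pos hx, dif_pos hy]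
    refine he₁ _ _ (Subtype.mk_lt_mk.mpr ?_)
    exact (Ordinal.typein_lt_typein _).mpr (Subtype.mk_lt_mk.mpr hxy)

theorem lex_tree_star_property (lam : Cardinal.{u}) (hlam : ℵ₀ ≤ lam) :
    Cardinal.mk (List lam.ord.ToType) = lam ∧
    ∀ θ : Cardinal.{u}, ℵ₀ ≤ θ → θ < lam →
      ∀ J₀ : Set (List lam.ord.ToType), Cardinal.mk J₀ = θ →
        ∃ J₁ : Set (List lam.ord.ToType), J₀ ⊆ J₁ ∧ Cardinal.mk J₁ = θ ∧
          ∀ Js : Set (List lam.ord.ToType), Cardinal.mk Js ≤ θ →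
            ∃ f : ↥(J₀ ∪ Js) → ↥J₁, StrictMono f ∧
              ∀ (x : List lam.ord.ToType) (hx : x ∈ J₀),
                ↑(f ⟨x, Set.mem_union_left Js hx⟩) = x := by
  classical
  haveI : Infinite lam.ord.ToType := by
    rw [Cardinal.infinite_iff, Cardinal.mk_toType, Cardinal.card_ord]; exact hlam
  refine ⟨by rw [Cardinal.mk_list_eq_mk, Cardinal.mk_toType, Cardinal.card_ord], ?_⟩
  intro θ hθ hθlam J₀ hJ₀
  have wfα : WellFounded ((· < ·) : lam.ord.ToType → lam.ord.ToType → Prop) :=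
    wellFounded_lt
  -- coordinates appearing in a family of lists
  have hcoords : ∀ J : Set (List lam.ord.ToType), #J ≤ θ →
      #(⋃ t ∈ J, {x | x ∈ t}) ≤ θ := by
    intro J hJ
    rcases isEmpty_or_nonempty ↥J with hE | hN
    · have hempty : (⋃ t ∈ J, {x | x ∈ t}) = (∅ : Set lam.ord.ToType) := by
        apply Set.eq_empty_iff_forall_notMem.mpr
        intro x hx
        rw [Set.mem_iUnion₂] at hx
        obtain ⟨t, ht, _⟩ := hx
        exact hE.false ⟨t, ht⟩
      rw [hempty]
      simp
    · calc #(⋃ t ∈ J, {x | x ∈ t}) ≤ #J * ⨆ t : J, #{x | x ∈ t.1} :=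
            Cardinal.mk_biUnion_le _ _
        _ ≤ θ * ℵ₀ := mul_le_mul' hJ
            (ciSup_le' fun t => ((t.1).finite_toSet.lt_aleph0).le)
        _ = θ := Cardinal.mul_eq_left hθ hθ Cardinal.aleph0_ne_zero
  set A₀ : Set lam.ord.ToType := ⋃ t ∈ J₀, {x | x ∈ t} with hA₀def
  have hA₀mem : ∀ t ∈ J₀, ∀ x ∈ t, x ∈ A₀ := by
    intro t ht x hx
    rw [hA₀def, Set.mem_iUnion₂]
    exact ⟨t, ht, hx⟩
  have hA₀card : #A₀ ≤ θ := hcoords J₀ (le_of_eq hJ₀)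
  -- the gap representatives
  set P : lam.ord.ToType → lam.ord.ToType → Prop :=
    fun x γ => γ ∉ A₀ ∧ ∀ a ∈ A₀, (a < γ ↔ a < x) with hPdef
  have hPself : ∀ x, x ∉ A₀ → P x x := fun x hx => ⟨hx, fun a _ => Iff.rfl⟩
  set rep : lam.ord.ToType → lam.ord.ToType :=
    fun x => if h : ∃ γ, P x γ then wfα.min {γ | P x γ} h else x with hrepdef
  have hrepP : ∀ x, x ∉ A₀ → P x (rep x) := by
    intro x hx
    have h : ∃ γ, P x γ := ⟨x, hPself x hx⟩
    simp only [hrepdef, dif_pos h]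
    exact wfα.min_mem _ h
  have hrepmin : ∀ x, x ∉ A₀ → ∀ γ, P x γ → ¬ γ < rep x := by
    intro x hx γ hγ
    have h : ∃ γ, P x γ := ⟨x, hPself x hx⟩
    simp only [hrepdef, dif_pos h]
    exact wfα.not_lt_min _ hγ
  have hrepEq : ∀ x y, x ∉ A₀ → y ∉ A₀ → (∀ a ∈ A₀, (a < x ↔ a < y)) →
      rep x = rep y := by
    intro x y hx hy hcut
    have hxy : ∀ γ, P x γ ↔ P y γ := by
      intro γ
      refine and_congr_right fun _ => forall₂_congr fun a ha => ?_
      rw [hcut a ha]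
    have h1' : P y (rep x) := (hxy _).mp (hrepP x hx)
    have h2' : P x (rep y) := (hxy _).mpr (hrepP y hy)
    exact le_antisymm (not_lt.mp (hrepmin x hx _ h2')) (not_lt.mp (hrepmin y hy _ h1'))
  have hrepNotA : ∀ x, x ∉ A₀ → rep x ∉ A₀ := fun x hx => (hrepP x hx).1
  have hrepLtA : ∀ x, x ∉ A₀ → ∀ a ∈ A₀, (x < a → rep x < a) ∧ (a < x → a < rep x) := by
    intro x hx a ha
    constructor
    · intro hxa
      have h1 : ¬ a < rep x := fun h => absurd (((hrepP x hx).2 a ha).mp h) (not_lt.mpr hxa.le)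
      refine lt_of_le_of_ne (not_lt.mp h1) ?_
      intro h
      exact (hrepP x hx).1 (h ▸ ha)
    · intro hax
      exact ((hrepP x hx).2 a ha).mpr hax
  have hcutlt : ∀ x y, x ∉ A₀ → x < y → (¬ ∀ a ∈ A₀, (a < x ↔ a < y)) →
      ∃ a ∈ A₀, x < a ∧ a < y ∧ ¬ a < x := by
    intro x y hxA hxy hcut
    have hex : ∃ a, a ∈ A₀ ∧ ¬ (a < x ↔ a < y) := by
      by_contra hall
      rw [not_exists] at hall
      exact hcut fun a ha => not_not.mp fun hn => hall a ⟨ha, hn⟩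
    obtain ⟨a, ha, hne⟩ := hex
    have h2 : a < y ∧ ¬ a < x := by
      by_cases hax : a < x
      · exact absurd (iff_of_true hax (hax.trans hxy)) hne
      · by_cases hay : a < y
        · exact ⟨hay, hax⟩
        · exact absurd (iff_of_false hax hay) hne
    exact ⟨a, ha, lt_of_le_of_ne (not_lt.mp h2.2) (fun h => hxA (h ▸ ha)), h2.1, h2.2⟩
  have hrepLtRep : ∀ x y, x ∉ A₀ → y ∉ A₀ → x < y → rep x = rep y ∨ rep x < rep y := by
    intro x y hx hy hxy
    by_cases hcut : ∀ a ∈ A₀, (a < x ↔ a < y)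
    · exact Or.inl (hrepEq x y hx hy hcut)
    · obtain ⟨a, ha, hxa, hay, _⟩ := hcutlt x y hx hxy hcut
      exact Or.inr (lt_trans ((hrepLtA x hx a ha).1 hxa)
        (((hrepP y hy).2 a ha).mpr hay))
  set R : Set lam.ord.ToType := rep '' {x | x ∉ A₀} with hRdef
  have hRfix : ∀ ρ ∈ R, ρ ∉ A₀ ∧ rep ρ = ρ := by
    rintro ρ ⟨x, hx, rfl⟩
    refine ⟨hrepNotA x hx, ?_⟩
    exact hrepEq (rep x) x (hrepNotA x hx) hx ((hrepP x hx).2)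
  -- counting the representatives
  set Q : lam.ord.ToType → Set lam.ord.ToType := fun ρ => {a | a ∈ A₀ ∧ ρ < a} with hQdef
  set Ψ : ↥R → Option ↥A₀ := fun ρ => if h : (Q ρ.1).Nonempty then
      some ⟨wfα.min (Q ρ.1) h, (wfα.min_mem _ h).1⟩ else none with hΨdef
  have hΨkey : ∀ ρ ρ' : ↥R, ρ.1 < ρ'.1 → Ψ ρ ≠ Ψ ρ' := by
    intro ρ ρ' hlt heq
    obtain ⟨hρA, hρfix⟩ := hRfix ρ.1 ρ.2
    obtain ⟨hρ'A, hρ'fix⟩ := hRfix ρ'.1 ρ'.2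
    have hcut : ¬ ∀ a ∈ A₀, (a < ρ.1 ↔ a < ρ'.1) := by
      intro hc
      have h := hrepEq ρ.1 ρ'.1 hρA hρ'A hc
      rw [hρfix, hρ'fix] at h
      exact absurd h (ne_of_lt hlt)
    obtain ⟨a, ha, hρa, haρ', _⟩ := hcutlt ρ.1 ρ'.1 hρA hlt hcut
    have haQ : a ∈ Q ρ.1 := ⟨ha, hρa⟩
    have hQne : (Q ρ.1).Nonempty := ⟨a, haQ⟩
    have hminle : wfα.min (Q ρ.1) hQne ≤ a := not_lt.mp (wfα.not_lt_min _ haQ)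
    simp only [hΨdef, dif_pos hQne] at heq
    by_cases h' : (Q ρ'.1).Nonempty
    · simp only [dif_pos h'] at heq
      have hmm : wfα.min (Q ρ.1) hQne = wfα.min (Q ρ'.1) h' :=
        Subtype.ext_iff.mp (Option.some_injective _ heq)
      have h2 : ρ'.1 < wfα.min (Q ρ'.1) h' := (wfα.min_mem _ h').2
      rw [← hmm] at h2
      exact absurd (lt_of_lt_of_le (lt_trans haρ' h2) hminle) (lt_irrefl a)
    · simp only [dif_neg h'] at heq
      exact Option.some_ne_none _ heq
  have hΨinj : Function.Injective Ψ := by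
    intro ρ ρ' h
    rcases lt_trichotomy ρ.1 ρ'.1 with h1 | h1 | h1
    · exact absurd h (hΨkey ρ ρ' h1)
    · exact Subtype.ext h1
    · exact absurd h.symm (hΨkey ρ' ρ h1)
  have hRcard : #R ≤ θ := by
    calc #R ≤ #(Option ↥A₀) := Cardinal.mk_le_of_injective hΨinj
      _ = #A₀ + 1 := Cardinal.mk_option
      _ ≤ θ + θ := add_le_add hA₀card (le_trans Cardinal.one_le_aleph0 hθ)
      _ = θ := Cardinal.add_eq_self hθ
  -- the copy of θ inside lam
  have hθord : θ.ord ≤ lam.ord := Cardinal.ord_le_ord.mpr (le_of_lt hθlam)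
  set κα : θ.ord.ToType ≤i lam.ord.ToType := Ordinal.initialSegToType hθord with hκα
  have hκmono : StrictMono ⇑κα := fun a b h => κα.map_rel_iff.mpr h
  -- the alphabet of J₁
  set C : Set lam.ord.ToType := (A₀ ∪ R) ∪ Set.range ⇑κα with hCdef
  have hCA₀ : A₀ ⊆ C := fun x hx => Set.mem_union_left _ (Set.mem_union_left _ hx)
  have hCR : R ⊆ C := fun x hx => Set.mem_union_left _ (Set.mem_union_right _ hx)
  have hCκ : Set.range ⇑κα ⊆ C := fun x hx => Set.mem_union_right _ hx
  have hκrange : #(Set.range ⇑κα) = θ := by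
    rw [Cardinal.mk_range_eq _ hκmono.injective, Cardinal.mk_toType, Cardinal.card_ord]
  have hCcard : #C = θ := by
    apply le_antisymm
    · calc #C ≤ #↥(A₀ ∪ R) + #(Set.range ⇑κα) := Cardinal.mk_union_le _ _
        _ ≤ (#A₀ + #R) + #(Set.range ⇑κα) :=
            add_le_add_left (Cardinal.mk_union_le _ _) _
        _ ≤ (θ + θ) + θ := by
            refine add_le_add (add_le_add hA₀card hRcard) (le_of_eq hκrange)
        _ = θ := by rw [Cardinal.add_eq_self hθ, Cardinal.add_eq_self hθ]
    · rw [← hκrange]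
      exact Cardinal.mk_le_mk_of_subset hCκ
  haveI hCinf : Infinite ↥C := by
    rw [Cardinal.infinite_iff, hCcard]; exact hθ
  set J₁ : Set (List lam.ord.ToType) := {l | ∀ x ∈ l, x ∈ C} with hJ₁def
  have hJ₀J₁ : J₀ ⊆ J₁ := fun t ht x hx => hCA₀ (hA₀mem t ht x hx)
  have hJ₁card : #J₁ = θ := by
    apply le_antisymm
    · have hrange : Set.range (List.map (Subtype.val : ↥C → lam.ord.ToType)) = J₁ := by
        ext l
        constructor
        · rintro ⟨m, rfl⟩ x hx
          rw [List.mem_map] at hx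
          obtain ⟨y, _, rfl⟩ := hx
          exact y.2
        · intro hl
          induction l with
          | nil => exact ⟨[], rfl⟩
          | cons a l ih =>
              obtain ⟨m, hm⟩ := ih fun x hx => hl x (List.mem_cons_of_mem a hx)
              exact ⟨⟨a, hl a List.mem_cons_self⟩ :: m, by simp [hm]⟩
      calc #J₁ = #(Set.range (List.map (Subtype.val : ↥C → lam.ord.ToType))) := by
            rw [hrange]
        _ = #(List ↥C) := Cardinal.mk_range_eq _
            (List.map_injective_iff.mpr Subtype.val_injective)
        _ = #↥C := Cardinal.mk_list_eq_mk _
        _ ≤ θ := le_of_eq hCcard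
    · rw [← hJ₀]
      exact Cardinal.mk_le_mk_of_subset hJ₀J₁
  refine ⟨J₁, hJ₀J₁, hJ₁card, ?_⟩
  intro Js hJs
  set B : Set lam.ord.ToType := A₀ ∪ ⋃ t ∈ Js, {x | x ∈ t} with hBdef
  have hA₀B : A₀ ⊆ B := Set.subset_union_left
  have hBcard : #B ≤ θ := by
    calc #B ≤ #A₀ + #(⋃ t ∈ Js, {x | x ∈ t}) := Cardinal.mk_union_le _ _
      _ ≤ θ + θ := add_le_add hA₀card (hcoords Js hJs)
      _ = θ := Cardinal.add_eq_self hθ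
  choose E hE0 hE1 using fun ρ : lam.ord.ToType =>
    exists_divLt_embed_set θ hθ {y | y ∈ B ∧ y ∉ A₀ ∧ rep y = ρ}
      ((Cardinal.mk_le_mk_of_subset fun y hy => hy.1).trans hBcard)
  set g : lam.ord.ToType → List lam.ord.ToType := fun x =>
    if x ∈ A₀ then [x] else rep x :: (E (rep x) x).map ⇑κα with hgdef
  have hg0 : ∀ x ∈ B, g x ≠ [] := by
    intro x hx
    by_cases h : x ∈ A₀ <;> simp [hgdef, h]
  have hg1 : ∀ x ∈ B, ∀ y ∈ B, x < y → DivLt (g x) (g y) := by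
    intro x hx y hy hxy
    by_cases hxA : x ∈ A₀ <;> by_cases hyA : y ∈ A₀
    · simp only [hgdef, if_pos hxA, if_pos hyA]
      exact divLt_of_head_lt hxy
    · simp only [hgdef, if_pos hxA, if_neg hyA]
      exact divLt_of_head_lt ((hrepLtA y hyA x hxA).2 hxy)
    · simp only [hgdef, if_neg hxA, if_pos hyA]
      exact divLt_of_head_lt ((hrepLtA x hxA y hyA).1 hxy)
    · simp only [hgdef, if_neg hxA, if_neg hyA]
      rcases hrepLtRep x y hxA hyA hxy with heq | hlt
      · rw [heq]
        exact DivLt.cons_same _ (DivLt.map hκmono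
          (hE1 (rep y) x ⟨hx, hxA, heq⟩ y ⟨hy, hyA, rfl⟩ hxy))
      · exact divLt_of_head_lt hlt
  have hmemB : ∀ t ∈ J₀ ∪ Js, ∀ x ∈ t, x ∈ B := by
    rintro t (ht | ht) x hx
    · exact hA₀B (hA₀mem t ht x hx)
    · refine Set.mem_union_right _ ?_
      rw [Set.mem_iUnion₂]
      exact ⟨t, ht, hx⟩
  have hgC : ∀ t ∈ J₀ ∪ Js, t.flatMap g ∈ J₁ := by
    intro t ht x hx
    rw [List.mem_flatMap] at hx
    obtain ⟨a, ha, hxa⟩ := hx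
    by_cases haA : a ∈ A₀
    · simp only [hgdef, if_pos haA, List.mem_singleton] at hxa
      exact hxa ▸ hCA₀ haA
    · simp only [hgdef, if_neg haA, List.mem_cons] at hxa
      rcases hxa with rfl | hxa
      · exact hCR ⟨a, haA, rfl⟩
      · rw [List.mem_map] at hxa
        obtain ⟨y, _, rfl⟩ := hxa
        exact hCκ ⟨y, rfl⟩
  have hlexiff : ∀ l l' : List lam.ord.ToType, l < l' ↔ List.Lex (· < ·) l l' :=
    fun _ _ => Iff.rfl
  refine ⟨fun t => ⟨t.1.flatMap g, hgC t.1 t.2⟩, ?_, ?_⟩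
  · intro t t' hlt
    have h1 : t.1 < t'.1 := Subtype.coe_lt_coe.mpr hlt
    rw [Subtype.mk_lt_mk, hlexiff]
    exact lex_flatMap hg0 hg1 (hmemB t.1 t.2) (hmemB t'.1 t'.2) ((hlexiff _ _).mp h1)
  · intro x hx
    show x.flatMap g = x
    have hall : ∀ y ∈ x, y ∈ A₀ := hA₀mem x hx
    clear hx
    induction x with
    | nil => rfl
    | cons a l ih =>
        rw [List.flatMap_cons]
        simp only [hgdef, if_pos (hall a List.mem_cons_self)]
        rw [ih fun y hy => hall y (List.mem_cons_of_mem a hy)]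
        rfl
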